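/- Let λ_L := ρ0 + β·p·(ρ0 − ρ1) and λ_H := ρ1. For every fixed π ∈ [0,1], the function λ ↦ V1(π,λ) − V0(π,λ) is decreasing on [λ_L, λ_H]: for λ_L ≤ λ1 < λ2 ≤ λ_H, V1(π,λ2) − V0(π,λ2) ≤ V1(π,λ1) − V0(π,λ1). -/
import Mathlib

lemma max_sub_max_le (a b c d : ℝ) : max a b - max c d ≤ max (a - c) (b - d) := by
  have h : max a b ≤ max c d + max (a - c) (b - d) := by
    apply max_le
    · have := le_max_left c d; have := le_max_left (a - c) (b - d); linarith
    · have := le_max_right c d; have := le_max_right (a - c) (b - d); linarith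
  linarith

lemma min_le_max_sub_max (a b c d : ℝ) : min (a - c) (b - d) ≤ max a b - max c d := by
  have h : max c d ≤ max a b - min (a - c) (b - d) := by
    apply max_le
    · have := min_le_left (a - c) (b - d); have := le_max_left a b; linarith
    · have := min_le_right (a - c) (b - d); have := le_max_right a b; linarith
  linarith

theorem stmt_15 (p ρ0 ρ1 β : ℝ)
    (hp0 : 0 < p) (hp1 : p < 1) (hr0 : 0 < ρ0) (hr01 : ρ0 < ρ1) (hr1 : ρ1 < 1)
    (hb0 : 0 < β) (hb1 : β < 1)
    (V : ℝ → ℝ → ℝ)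
    (hVbd : ∀ lam : ℝ, ∃ C : ℝ, ∀ π ∈ Set.Icc (0:ℝ) 1, |V π lam| ≤ C)
    (hVeq : ∀ lam : ℝ, ∀ π ∈ Set.Icc (0:ℝ) 1,
      V π lam = max (lam + β * V ((1 - p) * π) lam)
        (π * ρ0 + (1 - π) * ρ1 + β * V 1 lam)) :
    ∀ π ∈ Set.Icc (0:ℝ) 1, ∀ lam1 lam2 : ℝ,
      ρ0 + β * p * (ρ0 - ρ1) ≤ lam1 → lam1 < lam2 → lam2 ≤ ρ1 →
      (π * ρ0 + (1 - π) * ρ1 + β * V 1 lam2) - (lam2 + β * V ((1 - p) * π) lam2) ≤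
      (π * ρ0 + (1 - π) * ρ1 + β * V 1 lam1) - (lam1 + β * V ((1 - p) * π) lam1) := by
  intro π hπ lam1 lam2 hL h12 hH
  set δ : ℝ := lam2 - lam1 with hδ
  have hδpos : 0 < δ := by simp [hδ]; linarith
  set T := Set.Icc (0:ℝ) 1 with hT
  set f : ℝ → ℝ := fun q => V q lam2 - V q lam1 with hf
  obtain ⟨C1, hC1⟩ := hVbd lam1
  obtain ⟨C2, hC2⟩ := hVbd lam2
  have hmemm : ∀ q ∈ T, (1 - p) * q ∈ T := by
    rintro q ⟨hq0, hq1⟩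
    constructor
    · nlinarith
    · nlinarith
  have h1T : (1:ℝ) ∈ T := by constructor <;> norm_num
  -- recursion bounds
  have hub : ∀ q ∈ T, f q ≤ max (δ + β * f ((1 - p) * q)) (β * f 1) := by
    intro q hq
    have e2 := hVeq lam2 q hq
    have e1 := hVeq lam1 q hq
    have key := max_sub_max_le (lam2 + β * V ((1 - p) * q) lam2)
      (q * ρ0 + (1 - q) * ρ1 + β * V 1 lam2)
      (lam1 + β * V ((1 - p) * q) lam1)
      (q * ρ0 + (1 - q) * ρ1 + β * V 1 lam1)
    have h1 : f q = max (lam2 + β * V ((1 - p) * q) lam2)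
        (q * ρ0 + (1 - q) * ρ1 + β * V 1 lam2) -
        max (lam1 + β * V ((1 - p) * q) lam1)
        (q * ρ0 + (1 - q) * ρ1 + β * V 1 lam1) := by
      simp only [hf]; rw [← e1, ← e2]
    rw [h1]
    refine le_trans key (le_of_eq ?_)
    congr 1 <;> simp [hf, hδ] <;> ring
  have hlb : ∀ q ∈ T, min (δ + β * f ((1 - p) * q)) (β * f 1) ≤ f q := by
    intro q hq
    have e2 := hVeq lam2 q hq
    have e1 := hVeq lam1 q hq
    have key := min_le_max_sub_max (lam2 + β * V ((1 - p) * q) lam2)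
      (q * ρ0 + (1 - q) * ρ1 + β * V 1 lam2)
      (lam1 + β * V ((1 - p) * q) lam1)
      (q * ρ0 + (1 - q) * ρ1 + β * V 1 lam1)
    have h1 : f q = max (lam2 + β * V ((1 - p) * q) lam2)
        (q * ρ0 + (1 - q) * ρ1 + β * V 1 lam2) -
        max (lam1 + β * V ((1 - p) * q) lam1)
        (q * ρ0 + (1 - q) * ρ1 + β * V 1 lam1) := by
      simp only [hf]; rw [← e1, ← e2]
    rw [h1]
    refine le_trans (le_of_eq ?_) key
    congr 1 <;> simp [hf, hδ] <;> ring
  -- sup and inf of f on T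
  have hne : (f '' T).Nonempty := ⟨f 1, ⟨1, h1T, rfl⟩⟩
  have hbdda : BddAbove (f '' T) := by
    refine ⟨C2 + C1, ?_⟩
    rintro x ⟨q, hq, rfl⟩
    have := abs_le.mp (hC1 q hq)
    have := abs_le.mp (hC2 q hq)
    simp only [hf]; linarith [this.1, this.2]
  have hbddb : BddBelow (f '' T) := by
    refine ⟨-(C2 + C1), ?_⟩
    rintro x ⟨q, hq, rfl⟩
    have h1 := abs_le.mp (hC1 q hq)
    have h2 := abs_le.mp (hC2 q hq)
    simp only [hf]; linarith [h1.2, h2.1]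
  set S := sSup (f '' T) with hSdef
  set I := sInf (f '' T) with hIdef
  have hleS : ∀ q ∈ T, f q ≤ S := fun q hq => le_csSup hbdda ⟨q, hq, rfl⟩
  have hgeI : ∀ q ∈ T, I ≤ f q := fun q hq => csInf_le hbddb ⟨q, hq, rfl⟩
  have hSrec : S ≤ δ + β * S := by
    apply csSup_le hne
    rintro x ⟨q, hq, rfl⟩
    have h1 := hleS _ (hmemm q hq)
    have h2 := hleS 1 h1T
    have h3 := hub q hq
    have h4 : max (δ + β * f ((1 - p) * q)) (β * f 1) ≤ δ + β * S := by
      apply max_le <;> nlinarith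
    linarith
  have hSbd : (1 - β) * S ≤ δ := by nlinarith
  have hIrec : min (δ + β * I) (β * f 1) ≤ I := by
    apply le_csInf hne
    rintro x ⟨q, hq, rfl⟩
    have h1 := hgeI _ (hmemm q hq)
    have h3 := hlb q hq
    have h4 : min (δ + β * I) (β * f 1) ≤ min (δ + β * f ((1 - p) * q)) (β * f 1) := by
      apply le_min
      · exact le_trans (min_le_left _ _) (by nlinarith)
      · exact min_le_right _ _
    linarith
  -- the key inequality
  have hq' : (1 - p) * π ∈ T := hmemm π hπ
  have hf1S := hleS 1 h1T
  have hfq'I := hgeI _ hq'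
  have key : β * f 1 - β * f ((1 - p) * π) ≤ δ := by
    rcases le_total (δ + β * I) (β * f 1) with hcase | hcase
    · -- min = δ + β I, so I ≥ δ + β I, hence (1-β) I ≥ δ ≥ (1-β) S, so S ≤ I
      have hI1 : δ + β * I ≤ I := le_trans (by rw [min_eq_left hcase]) hIrec
      have hIS : S ≤ I := by nlinarith
      nlinarith
    · -- min = β f 1, so β f 1 ≤ I
      have hI1 : β * f 1 ≤ I := le_trans (by rw [min_eq_right hcase]) hIrec
      nlinarith
  have hexp : β * f 1 - β * f ((1 - p) * π) =
      β * V 1 lam2 - β * V 1 lam1 - β * V ((1 - p) * π) lam2 + β * V ((1 - p) * π) lam1 := by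
    simp only [hf]; ring
  rw [hexp] at key
  simp only [hδ] at key
  linarith
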